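/- Let n ≥ 2 and d ≥ 1, and let ρ, σ be arbitrary d×d complex matrices. Then Tr[(σ ⊗ Id^{⊗(n-1)}) · S_n · (ρ ⊗ ρ ⊗ ⋯ ⊗ ρ)] = Tr[ρ^n σ], where ρ appears n times in the tensor product. -/

import Mathlib

open Matrix BigOperators

/-- The `n`-fold tensor (Kronecker) product of `d × d` matrices, one per register. -/
noncomputable def tensPow {d n : ℕ} (A : Fin n → Matrix (Fin d) (Fin d) ℂ) :
    Matrix (Fin n → Fin d) (Fin n → Fin d) ℂ :=
  Matrix.of fun i j => ∏ μ, A μ (i μ) (j μ)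

/-- The cyclic shift operator `S_n` on `(ℂ^d)^{⊗ n}`, determined by
`S_n (v_1 ⊗ v_2 ⊗ ⋯ ⊗ v_n) = v_n ⊗ v_1 ⊗ ⋯ ⊗ v_{n-1}`. -/
noncomputable def cyclicShift (d n : ℕ) [NeZero n] :
    Matrix (Fin n → Fin d) (Fin n → Fin d) ℂ :=
  Matrix.of fun i j => if ∀ μ, i μ = j (μ - 1) then 1 else 0

/-- For `n ≥ 2`, `d ≥ 1` and arbitrary `d × d` complex matrices `ρ, σ`,
`Tr[(σ ⊗ Id^{⊗(n-1)}) ⬝ S_n ⬝ ρ^{⊗ n}] = Tr[ρ^n σ]`. -/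
noncomputable def chainAux {d : ℕ} (A : Matrix (Fin d) (Fin d) ℂ) :
    (m : ℕ) → Fin d → (Fin (m+1) → Fin d) → ℂ
  | 0, a, k => A a (k 0)
  | (m+1), a, k => A a (k 0) * chainAux A m (k 0) (Fin.tail k)

lemma sum_cons_aux {d : ℕ} {β : Type*} [AddCommMonoid β] (m : ℕ)
    (f : (Fin (m+1) → Fin d) → β) :
    ∑ k : Fin (m+1) → Fin d, f k = ∑ c : Fin d, ∑ k' : Fin m → Fin d, f (Fin.cons c k') := by
  rw [← (Fin.consEquiv (fun _ : Fin (m+1) => Fin d)).sum_comp f, Fintype.sum_prod_type]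
  rfl

lemma chainAux_eq_prod {d : ℕ} (A : Matrix (Fin d) (Fin d) ℂ) :
    ∀ (m : ℕ) (a : Fin d) (k : Fin (m+1) → Fin d),
      chainAux A m a k = ∏ t : Fin (m+1),
        A ((Fin.cons a k : Fin (m+2) → Fin d) t.castSucc)
          ((Fin.cons a k : Fin (m+2) → Fin d) t.succ) := by
  intro m
  induction m with
  | zero => intro a k; simp [chainAux, Fin.prod_univ_succ]
  | succ m ih =>
    intro a k
    rw [Fin.prod_univ_succ]
    simp only [Fin.castSucc_zero, Fin.cons_zero, Fin.cons_succ]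
    rw [chainAux]
    congr 1
    rw [ih (k 0) (Fin.tail k)]
    refine Finset.prod_congr rfl fun t _ => ?_
    simp [Fin.cons_self_tail, ← Fin.succ_castSucc, Fin.cons_succ, Fin.tail]

lemma chainAux_sum {d : ℕ} (A C : Matrix (Fin d) (Fin d) ℂ) :
    ∀ (m : ℕ) (a b : Fin d),
      ∑ k : Fin (m+1) → Fin d, chainAux A m a k * C (k (Fin.last m)) b
        = (A ^ (m+1) * C) a b := by
  intro m
  induction m with
  | zero =>
    intro a b
    rw [sum_cons_aux]
    simp [chainAux, Matrix.mul_apply]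
  | succ m ih =>
    intro a b
    rw [sum_cons_aux]
    have : ∀ c : Fin d, ∑ k' : Fin (m+1) → Fin d,
        chainAux A (m+1) a (Fin.cons c k') * C ((Fin.cons c k' : Fin (m+2) → Fin d) (Fin.last (m+1))) b
        = A a c * (A ^ (m+1) * C) c b := by
      intro c
      rw [← ih c b, Finset.mul_sum]
      refine Finset.sum_congr rfl fun k' _ => ?_
      rw [chainAux]
      simp only [Fin.cons_zero, Fin.tail_cons]
      rw [show Fin.last (m+1) = (Fin.last m).succ from (Fin.succ_last m).symm, Fin.cons_succ]
      ring
    rw [Finset.sum_congr rfl fun c _ => this c]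
    conv_rhs => rw [pow_succ', Matrix.mul_assoc, Matrix.mul_apply]
theorem trace_shift_tensPow_eq {n d : ℕ} [NeZero n] (hn : 2 ≤ n) (hd : 1 ≤ d)
    (ρ σ : Matrix (Fin d) (Fin d) ℂ) :
    (tensPow (fun μ : Fin n => if (μ : ℕ) = 0 then σ else 1) * cyclicShift d n *
        tensPow (fun _ : Fin n => ρ)).trace
      = (ρ ^ n * σ).trace := by
  obtain ⟨m, rfl⟩ : ∃ m, n = m + 2 := ⟨n - 2, by omega⟩
  have hsub : ∀ t : Fin (m+1), t.succ - 1 = t.castSucc := by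
    intro t
    apply Fin.ext
    simp only [Fin.sub_def, Fin.val_succ, Fin.coe_castSucc, Fin.val_one]
    rw [show m + 1 + 1 - 1 + (↑t + 1) = ↑t + (m+2) by omega,
      Nat.add_mod_right, Nat.mod_eq_of_lt (by omega)]
  have hzero : (0 : Fin (m+2)) - 1 = Fin.last (m+1) := by
    apply Fin.ext
    simp only [Fin.sub_def, Fin.val_zero, Fin.val_one, Fin.val_last]
    rw [show m + 1 + 1 - 1 + 0 = m+1 by omega]
    exact Nat.mod_eq_of_lt (by omega)
  have hS : tensPow (fun μ : Fin (m+2) => if (μ : ℕ) = 0 then σ else 1) * cyclicShift d (m+2)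
      = Matrix.of (fun i x : Fin (m+2) → Fin d =>
          ∏ μ : Fin (m+2), (if (μ : ℕ) = 0 then σ else 1) (i μ) (x (μ - 1))) := by
    ext i x
    rw [Matrix.mul_apply]
    have h1 : ∀ j : Fin (m+2) → Fin d,
        tensPow (fun μ : Fin (m+2) => if (μ : ℕ) = 0 then σ else 1) i j *
          cyclicShift d (m+2) j x
        = if j = (fun μ => x (μ - 1)) then
            tensPow (fun μ : Fin (m+2) => if (μ : ℕ) = 0 then σ else 1) i j else 0 := by
      intro j
      simp only [cyclicShift, Matrix.of_apply]
      by_cases h : j = fun μ => x (μ - 1)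
      · rw [if_pos h, if_pos, mul_one]
        intro μ; rw [h]
      · rw [if_neg h, if_neg, mul_zero]
        exact fun hc => h (funext hc)
    rw [Finset.sum_congr rfl fun j _ => h1 j, Finset.sum_ite_eq' Finset.univ]
    simp [tensPow]
  rw [hS]
  have expand : (Matrix.of (fun i x : Fin (m+2) → Fin d =>
          ∏ μ : Fin (m+2), (if (μ : ℕ) = 0 then σ else 1) (i μ) (x (μ - 1))) *
        tensPow (fun _ : Fin (m+2) => ρ)).trace
      = ∑ x : Fin (m+2) → Fin d, ∑ i : Fin (m+2) → Fin d,
          (∏ μ : Fin (m+2), (if (μ : ℕ) = 0 then σ else 1) (i μ) (x (μ - 1))) * ∏ μ : Fin (m+2), ρ (x μ) (i μ) := by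
    simp only [Matrix.trace, Matrix.diag, Matrix.mul_apply, Matrix.of_apply, tensPow]
    rw [Finset.sum_comm]
  rw [expand]
  have step1 : ∀ x : Fin (m+2) → Fin d,
      ∑ i : Fin (m+2) → Fin d,
        (∏ μ : Fin (m+2), (if (μ : ℕ) = 0 then σ else 1) (i μ) (x (μ - 1))) * ∏ μ : Fin (m+2), ρ (x μ) (i μ)
      = ∑ a : Fin d, σ a (x (Fin.last (m+1))) *
          (ρ (x 0) a * ∏ t : Fin (m+1), ρ (x t.succ) (x t.castSucc)) := by
    intro x
    have e1 : ∀ i : Fin (m+2) → Fin d,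
        (∏ μ : Fin (m+2), (if (μ : ℕ) = 0 then σ else 1) (i μ) (x (μ - 1))) * ∏ μ : Fin (m+2), ρ (x μ) (i μ)
        = (σ (i 0) (x (Fin.last (m+1))) *
            if (∀ t : Fin (m+1), i t.succ = x t.castSucc) then (1:ℂ) else 0) *
          (ρ (x 0) (i 0) * ∏ t : Fin (m+1), ρ (x t.succ) (i t.succ)) := by
      intro i
      have p1 : (∏ μ : Fin (m+2), (if (μ : ℕ) = 0 then σ else 1) (i μ) (x (μ - 1)))
          = σ (i 0) (x (Fin.last (m+1))) *
            if (∀ t : Fin (m+1), i t.succ = x t.castSucc) then (1:ℂ) else 0 := by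
        rw [Fin.prod_univ_succ]
        congr 1
        · rw [hzero]; exact congrArg (fun M : Matrix (Fin d) (Fin d) ℂ => M (i 0) (x (Fin.last (m+1)))) (if_pos (show ((0 : Fin (m+2)) : ℕ) = 0 from Nat.zero_mod _))
        · calc ∏ t : Fin (m+1),
              (if ((t.succ : Fin (m+2)) : ℕ) = 0 then σ else 1) (i t.succ) (x (t.succ - 1))
              = ∏ t : Fin (m+1), if i t.succ = x t.castSucc then (1:ℂ) else 0 := by
                refine Finset.prod_congr rfl fun t _ => ?_
                rw [hsub t]
                simp [Matrix.one_apply]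
            _ = _ := by rw [Finset.prod_boole]; simp
      have p2 : (∏ μ : Fin (m+2), ρ (x μ) (i μ))
          = ρ (x 0) (i 0) * ∏ t : Fin (m+1), ρ (x t.succ) (i t.succ) :=
        Fin.prod_univ_succ _
      rw [p1, p2]
    rw [Finset.sum_congr rfl fun i _ => e1 i, sum_cons_aux]
    refine Finset.sum_congr rfl fun a _ => ?_
    have e2 : ∀ i' : Fin (m+1) → Fin d,
        (σ ((Fin.cons a i' : Fin (m+2) → Fin d) 0) (x (Fin.last (m+1))) *
          if (∀ t : Fin (m+1), (Fin.cons a i' : Fin (m+2) → Fin d) t.succ = x t.castSucc)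
            then (1:ℂ) else 0) *
        (ρ (x 0) ((Fin.cons a i' : Fin (m+2) → Fin d) 0) *
          ∏ t : Fin (m+1), ρ (x t.succ) ((Fin.cons a i' : Fin (m+2) → Fin d) t.succ))
        = if i' = (fun t => x t.castSucc) then
            σ a (x (Fin.last (m+1))) *
              (ρ (x 0) a * ∏ t : Fin (m+1), ρ (x t.succ) (i' t)) else 0 := by
      intro i'
      simp only [Fin.cons_zero, Fin.cons_succ]
      by_cases h : i' = fun t => x t.castSucc
      · rw [if_pos (fun t => by rw [h]), if_pos h, mul_one]
      · rw [if_neg (fun hc => h (funext hc)), if_neg h, mul_zero, zero_mul]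
    rw [Finset.sum_congr rfl fun i' _ => e2 i', Finset.sum_ite_eq' Finset.univ]
    simp
  rw [Finset.sum_congr rfl fun x _ => step1 x, sum_cons_aux]
  have step2 : ∀ (c : Fin d) (x' : Fin (m+1) → Fin d),
      ∑ a : Fin d, σ a ((Fin.cons c x' : Fin (m+2) → Fin d) (Fin.last (m+1))) *
        (ρ ((Fin.cons c x' : Fin (m+2) → Fin d) 0) a *
          ∏ t : Fin (m+1), ρ ((Fin.cons c x' : Fin (m+2) → Fin d) t.succ)
            ((Fin.cons c x' : Fin (m+2) → Fin d) t.castSucc))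
      = chainAux ρᵀ m c x' * (ρ * σ)ᵀ (x' (Fin.last m)) c := by
    intro c x'
    have hlast : (Fin.cons c x' : Fin (m+2) → Fin d) (Fin.last (m+1)) = x' (Fin.last m) := by
      rw [← Fin.succ_last, Fin.cons_succ]
    have hchain : (∏ t : Fin (m+1), ρ ((Fin.cons c x' : Fin (m+2) → Fin d) t.succ)
        ((Fin.cons c x' : Fin (m+2) → Fin d) t.castSucc)) = chainAux ρᵀ m c x' := by
      rw [chainAux_eq_prod]
      exact Finset.prod_congr rfl fun t _ => rfl
    rw [hlast, Fin.cons_zero, hchain, Matrix.transpose_apply, Matrix.mul_apply,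
      Finset.mul_sum]
    refine Finset.sum_congr rfl fun a _ => by ring
  rw [Finset.sum_congr rfl fun c _ =>
    Finset.sum_congr rfl fun x' _ => step2 c x']
  rw [Finset.sum_congr rfl fun c _ => chainAux_sum ρᵀ ((ρ * σ)ᵀ) m c c]
  rw [show (∑ c, (ρᵀ ^ (m+1) * (ρ * σ)ᵀ) c c) = (ρᵀ ^ (m+1) * (ρ * σ)ᵀ).trace from rfl]
  rw [← Matrix.transpose_pow, ← Matrix.transpose_mul, Matrix.trace_transpose,
    Matrix.trace_mul_comm, ← Matrix.mul_assoc, ← pow_succ]
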